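/- Two-sided (uniform-convergence) constraints (Theorem 3.2): for ε ≥ 0, with Z_ε = {z ∈ [−1,1]ⁿ : ‖(1/n)·F·z − b‖_∞ ≤ ε} nonempty, min over g ∈ [−1,1]ⁿ of sup over z ∈ Z_ε of ℓ(z,g) = (1/2)·inf over σ ∈ ℝᵖ of [−bᵀσ + (1/n)·Σ_{j=1}^n Ψ(x_jᵀσ) + ε·‖σ‖₁]; that is, the L∞ bound on b turns the dual problem into an L¹-regularized version of the original slack minimization over all of ℝᵖ. -/

import Mathlib

open scoped BigOperators

noncomputable def Psi (lp lm Γinv : ℝ → ℝ) (m : ℝ) : ℝ :=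
  if m ≤ lm (-1) - lp (-1) then -m + 2 * lm (-1)
  else if m < lm 1 - lp 1 then lp (Γinv m) + lm (Γinv m)
  else m + 2 * lp 1

noncomputable def lossV (lp lm : ℝ → ℝ) (n : ℕ) (z g : Fin n → ℝ) : ℝ :=
  (1 / (n : ℝ)) * ∑ j, ((1 + z j) / 2 * lp (g j) + (1 - z j) / 2 * lm (g j))

def ZeSet (p n : ℕ) (F : Fin p → Fin n → ℝ) (b : Fin p → ℝ) (ε : ℝ) : Set (Fin n → ℝ) :=
  {z | (∀ j, z j ∈ Set.Icc (-1:ℝ) 1) ∧ ∀ i, |(1 / (n : ℝ)) * (∑ j, F i j * z j) - b i| ≤ ε}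

lemma Psi_le_aux {lp lm Γinv : ℝ → ℝ}
    (hlpm : AntitoneOn lp (Set.Icc (-1) 1)) (hlmm : MonotoneOn lm (Set.Icc (-1) 1))
    (hmono : StrictMonoOn (fun x => lm x - lp x) (Set.Icc (-1) 1))
    (hGinvMem : ∀ m ∈ Set.Icc (lm (-1) - lp (-1)) (lm 1 - lp 1), Γinv m ∈ Set.Icc (-1:ℝ) 1)
    (hGinvRight : ∀ m ∈ Set.Icc (lm (-1) - lp (-1)) (lm 1 - lp 1), lm (Γinv m) - lp (Γinv m) = m)
    (m : ℝ) {g : ℝ} (hg : g ∈ Set.Icc (-1:ℝ) 1) :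
    Psi lp lm Γinv m ≤ lp g + lm g + |lm g - lp g - m| := by
  have hmem1 : (-1:ℝ) ∈ Set.Icc (-1:ℝ) 1 := by norm_num
  have hmem2 : (1:ℝ) ∈ Set.Icc (-1:ℝ) 1 := by norm_num
  have habs1 : lm g - lp g - m ≤ |lm g - lp g - m| := le_abs_self _
  have habs2 : -(lm g - lp g - m) ≤ |lm g - lp g - m| := neg_le_abs _
  unfold Psi
  split_ifs with h1 h2
  · -- m ≤ lm(-1) - lp(-1)
    have : lm (-1) ≤ lm g := hlmm hmem1 hg hg.1
    linarith
  · -- middle case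
    push_neg at h1
    have hm : m ∈ Set.Icc (lm (-1) - lp (-1)) (lm 1 - lp 1) := ⟨le_of_lt h1, le_of_lt h2⟩
    have hgs : Γinv m ∈ Set.Icc (-1:ℝ) 1 := hGinvMem m hm
    have hR : lm (Γinv m) - lp (Γinv m) = m := hGinvRight m hm
    rcases le_total m (lm g - lp g) with hc | hc
    · -- Γ g ≥ m, show Γinv m ≤ g
      have hle : Γinv m ≤ g := by
        by_contra hlt
        push_neg at hlt
        have := hmono hg hgs hlt
        simp only at this
        linarith
      have : lm (Γinv m) ≤ lm g := hlmm hgs hg hle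
      linarith
    · -- Γ g ≤ m, show g ≤ Γinv m
      have hle : g ≤ Γinv m := by
        by_contra hlt
        push_neg at hlt
        have := hmono hgs hg hlt
        simp only at this
        linarith
      have : lp (Γinv m) ≤ lp g := hlpm hg hgs hle
      linarith
  · -- m ≥ lm 1 - lp 1
    push_neg at h2
    have : lp 1 ≤ lp g := hlpm hg hmem2 hg.2
    linarith

lemma Psi_attained_aux {lp lm Γinv : ℝ → ℝ}
    (hmono : StrictMonoOn (fun x => lm x - lp x) (Set.Icc (-1) 1))
    (hGinvMem : ∀ m ∈ Set.Icc (lm (-1) - lp (-1)) (lm 1 - lp 1), Γinv m ∈ Set.Icc (-1:ℝ) 1)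
    (hGinvRight : ∀ m ∈ Set.Icc (lm (-1) - lp (-1)) (lm 1 - lp 1), lm (Γinv m) - lp (Γinv m) = m)
    (m : ℝ) :
    ∃ g ∈ Set.Icc (-1:ℝ) 1, lp g + lm g + |lm g - lp g - m| = Psi lp lm Γinv m := by
  unfold Psi
  split_ifs with h1 h2
  · refine ⟨-1, by norm_num, ?_⟩
    rw [abs_of_nonneg (by linarith)]
    ring
  · push_neg at h1
    have hm : m ∈ Set.Icc (lm (-1) - lp (-1)) (lm 1 - lp 1) := ⟨le_of_lt h1, le_of_lt h2⟩
    refine ⟨Γinv m, hGinvMem m hm, ?_⟩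
    rw [hGinvRight m hm]
    simp
  · push_neg at h2
    refine ⟨1, by norm_num, ?_⟩
    rw [abs_of_nonpos (by linarith)]
    ring

lemma swap_sum {p n : ℕ} (F : Fin p → Fin n → ℝ) (σ : Fin p → ℝ) (z : Fin n → ℝ) (r : ℝ) :
    ∑ i, (r * ∑ j, F i j * z j) * σ i = ∑ j, (r * ∑ i, σ i * F i j) * z j := by
  simp_rw [Finset.mul_sum, Finset.sum_mul]
  rw [Finset.sum_comm]
  exact Finset.sum_congr rfl fun j _ => Finset.sum_congr rfl fun i _ => by ring

lemma weak_dual {p n : ℕ} (F : Fin p → Fin n → ℝ) (b : Fin p → ℝ) {ε : ℝ}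
    (c : Fin n → ℝ) (σ' : Fin p → ℝ) {z : Fin n → ℝ} (hz : z ∈ ZeSet p n F b ε) :
    ∑ j, c j * z j ≤ ∑ j, |c j - (1/(n:ℝ)) * ∑ i, σ' i * F i j|
      + ∑ i, b i * σ' i + ε * ∑ i, |σ' i| := by
  obtain ⟨hz1, hz2⟩ := hz
  have key : ∑ j, c j * z j
      = ∑ j, (c j - (1/(n:ℝ)) * ∑ i, σ' i * F i j) * z j
        + ∑ i, ((1/(n:ℝ)) * ∑ j, F i j * z j) * σ' i := by
    rw [swap_sum, ← Finset.sum_add_distrib]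
    exact Finset.sum_congr rfl fun j _ => by ring
  rw [key]
  have h1 : ∑ j, (c j - (1/(n:ℝ)) * ∑ i, σ' i * F i j) * z j
      ≤ ∑ j, |c j - (1/(n:ℝ)) * ∑ i, σ' i * F i j| := by
    refine Finset.sum_le_sum fun j _ => ?_
    calc (c j - (1/(n:ℝ)) * ∑ i, σ' i * F i j) * z j
        ≤ |(c j - (1/(n:ℝ)) * ∑ i, σ' i * F i j) * z j| := le_abs_self _
      _ = |c j - (1/(n:ℝ)) * ∑ i, σ' i * F i j| * |z j| := abs_mul _ _
      _ ≤ |c j - (1/(n:ℝ)) * ∑ i, σ' i * F i j| * 1 := by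
          refine mul_le_mul_of_nonneg_left ?_ (abs_nonneg _)
          exact abs_le.2 ⟨(hz1 j).1, (hz1 j).2⟩
      _ = _ := mul_one _
  have h2 : ∑ i, ((1/(n:ℝ)) * ∑ j, F i j * z j) * σ' i
      ≤ ∑ i, (b i * σ' i + ε * |σ' i|) := by
    refine Finset.sum_le_sum fun i _ => ?_
    have hb := hz2 i
    have : ((1/(n:ℝ)) * ∑ j, F i j * z j) * σ' i
        = ((1/(n:ℝ)) * (∑ j, F i j * z j) - b i) * σ' i + b i * σ' i := by ring
    rw [this]
    have h3 : ((1/(n:ℝ)) * (∑ j, F i j * z j) - b i) * σ' i ≤ ε * |σ' i| := by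
      calc ((1/(n:ℝ)) * (∑ j, F i j * z j) - b i) * σ' i
          ≤ |((1/(n:ℝ)) * (∑ j, F i j * z j) - b i) * σ' i| := le_abs_self _
        _ = |(1/(n:ℝ)) * (∑ j, F i j * z j) - b i| * |σ' i| := abs_mul _ _
        _ ≤ ε * |σ' i| := mul_le_mul_of_nonneg_right hb (abs_nonneg _)
    linarith
  rw [Finset.sum_add_distrib, ← Finset.mul_sum] at h2
  linarith

lemma sep_lemma {p n : ℕ} (F : Fin p → Fin n → ℝ) (b : Fin p → ℝ) {ε : ℝ} (hε : 0 ≤ ε)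
    (hZ : (ZeSet p n F b ε).Nonempty) (c : Fin n → ℝ) {δ : ℝ} (hδ : 0 < δ) :
    ∃ σ' : Fin p → ℝ,
      ∑ j, |c j - (1/(n:ℝ)) * ∑ i, σ' i * F i j| + ∑ i, b i * σ' i + ε * ∑ i, |σ' i|
        ≤ sSup {w | ∃ z ∈ ZeSet p n F b ε, w = ∑ j, c j * z j} + δ := by
  classical
  set Mset : Set ℝ := {w | ∃ z ∈ ZeSet p n F b ε, w = ∑ j, c j * z j} with hMset
  have hMbdd : BddAbove Mset := by
    refine ⟨∑ j, |c j|, ?_⟩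
    rintro w ⟨z, hz, rfl⟩
    refine Finset.sum_le_sum fun j _ => ?_
    calc c j * z j ≤ |c j * z j| := le_abs_self _
      _ = |c j| * |z j| := abs_mul _ _
      _ ≤ |c j| * 1 := mul_le_mul_of_nonneg_left (abs_le.2 ⟨(hz.1 j).1, (hz.1 j).2⟩) (abs_nonneg _)
      _ = |c j| := mul_one _
  obtain ⟨z₀, hz₀⟩ := hZ
  have hMne : Mset.Nonempty := ⟨_, z₀, hz₀, rfl⟩
  set V := sSup Mset with hV
  have hle_V : ∀ z ∈ ZeSet p n F b ε, ∑ j, c j * z j ≤ V :=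
    fun z hz => le_csSup hMbdd ⟨z, hz, rfl⟩
  -- the affine map and the two convex sets
  set φm : (Fin n → ℝ) → (Fin p → ℝ) × ℝ :=
    fun z => (fun i => (1/(n:ℝ)) * (∑ j, F i j * z j) - b i, ∑ j, c j * z j) with hφm
  set Box : Set (Fin n → ℝ) := Set.Icc (fun _ => (-1:ℝ)) (fun _ => (1:ℝ)) with hBoxdef
  have hBoxmem : ∀ z : Fin n → ℝ, z ∈ Box ↔ ∀ j, z j ∈ Set.Icc (-1:ℝ) 1 := by
    intro z
    simp [hBoxdef, Set.mem_Icc, Pi.le_def, forall_and]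
  set K : Set ((Fin p → ℝ) × ℝ) := φm '' Box with hK
  set t := V + δ with ht
  set D : Set ((Fin p → ℝ) × ℝ) := {x | (∀ i, |x.1 i| ≤ ε) ∧ t ≤ x.2} with hD
  have hKcomp : IsCompact K := by
    refine IsCompact.image isCompact_Icc ?_
    refine Continuous.prodMk ?_ ?_
    · exact continuous_pi fun i =>
        ((continuous_const.mul (continuous_finset_sum _ fun j _ =>
          continuous_const.mul (continuous_apply j))).sub continuous_const)
    · exact continuous_finset_sum _ fun j _ => continuous_const.mul (continuous_apply j)
  have hKconv : Convex ℝ K := by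
    rintro _ ⟨z1, hz1, rfl⟩ _ ⟨z2, hz2, rfl⟩ a b' ha hb' hab
    refine ⟨a • z1 + b' • z2, (convex_Icc _ _) hz1 hz2 ha hb' hab, ?_⟩
    have hb2 : b' = 1 - a := by linarith
    subst hb2
    have hsum : ∀ G : Fin n → ℝ, ∑ j, G j * (a * z1 j + (1 - a) * z2 j)
        = a * ∑ j, G j * z1 j + (1 - a) * ∑ j, G j * z2 j := by
      intro G
      rw [Finset.mul_sum, Finset.mul_sum, ← Finset.sum_add_distrib]
      exact Finset.sum_congr rfl fun j _ => by ring
    refine Prod.ext ?_ ?_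
    · funext i
      simp only [hφm, Prod.fst_add, Prod.smul_fst, Pi.add_apply, Pi.smul_apply, smul_eq_mul]
      rw [hsum (F i)]
      ring
    · simp only [hφm, Prod.snd_add, Prod.smul_snd, smul_eq_mul, Pi.add_apply, Pi.smul_apply]
      rw [hsum c]
  have hDclosed : IsClosed D := by
    have : D = (⋂ i, {x : (Fin p → ℝ) × ℝ | |x.1 i| ≤ ε}) ∩ {x | t ≤ x.2} := by
      ext x; simp [hD, Set.mem_iInter]
    rw [this]
    refine IsClosed.inter (isClosed_iInter fun i => ?_) (isClosed_le continuous_const continuous_snd)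
    exact isClosed_le (((continuous_apply i).comp continuous_fst).abs) continuous_const
  have hDconv : Convex ℝ D := by
    rintro x hx y hy a b' ha hb' hab
    constructor
    · intro i
      simp only [Prod.fst_add, Prod.smul_fst, Pi.add_apply, Pi.smul_apply, smul_eq_mul]
      calc |a * x.1 i + b' * y.1 i| ≤ |a * x.1 i| + |b' * y.1 i| := abs_add_le _ _
        _ = a * |x.1 i| + b' * |y.1 i| := by
            rw [abs_mul, abs_mul, abs_of_nonneg ha, abs_of_nonneg hb']
        _ ≤ a * ε + b' * ε := add_le_add (mul_le_mul_of_nonneg_left (hx.1 i) ha)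
            (mul_le_mul_of_nonneg_left (hy.1 i) hb')
        _ = ε := by rw [← add_mul, hab, one_mul]
    · simp only [Prod.snd_add, Prod.smul_snd, smul_eq_mul]
      have h1 := hx.2; have h2 := hy.2
      calc t = a * t + b' * t := by rw [← add_mul, hab, one_mul]
        _ ≤ a * x.2 + b' * y.2 := add_le_add (mul_le_mul_of_nonneg_left h1 ha)
            (mul_le_mul_of_nonneg_left h2 hb')
  have hdisj : Disjoint K D := by
    rw [Set.disjoint_left]
    rintro _ ⟨z, hz, rfl⟩ ⟨hx1, hx2⟩
    have hzZ : z ∈ ZeSet p n F b ε := by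
      refine ⟨(hBoxmem z).1 hz, fun i => ?_⟩
      exact hx1 i
    have := hle_V z hzZ
    simp only [hφm] at hx2
    simp only [ht] at hx2
    linarith
  obtain ⟨f, u, v, hfu, huv, hfv⟩ :=
    geometric_hahn_banach_compact_closed hKconv hKcomp hDconv hDclosed hdisj
  -- decompose f
  set σ : Fin p → ℝ := fun i => f ((Pi.single i 1 : Fin p → ℝ), (0:ℝ)) with hσ
  set τ : ℝ := f ((0 : Fin p → ℝ), (1:ℝ)) with hτ
  have hfrep : ∀ (w : Fin p → ℝ) (s : ℝ), f (w, s) = (∑ i, w i * σ i) + s * τ := by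
    intro w s
    have hws : (w, s) = (∑ i, w i • ((Pi.single i 1 : Fin p → ℝ), (0:ℝ)))
        + s • ((0 : Fin p → ℝ), (1:ℝ)) := by
      refine Prod.ext ?_ ?_
      · simp only [Prod.fst_add, Prod.fst_sum, Prod.smul_fst, Prod.smul_snd, smul_zero,
          smul_eq_mul]
        funext j
        simp only [Pi.add_apply, Finset.sum_apply, Pi.smul_apply, Pi.zero_apply, smul_eq_mul]
        rw [Finset.sum_eq_single j (fun i _ hij => by
          simp [Pi.single_apply, Ne.symm hij]) (by simp)]
        simp
      · simp only [Prod.snd_add, Prod.snd_sum, Prod.smul_snd, Prod.smul_fst, smul_zero,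
          smul_eq_mul, mul_one]
        simp
    rw [hws, map_add, map_sum]
    simp only [map_smul, smul_eq_mul]
    rfl
  -- τ > 0
  have hDmem : ∀ s : ℝ, t ≤ s → ((fun _ => (0:ℝ)), s) ∈ D := by
    intro s hs
    exact ⟨fun i => by simpa using hε, hs⟩
  have hτpos : 0 < τ := by
    rcases lt_trichotomy τ 0 with hneg | hzero | hpos
    · exfalso
      set s₀ := max t ((v - 1)/τ) with hs₀
      have h1 := hfv _ (hDmem s₀ (le_max_left _ _))
      rw [hfrep] at h1
      simp only [zero_mul, Finset.sum_const_zero, zero_add] at h1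
      have h2 : (v - 1)/τ ≤ s₀ := le_max_right _ _
      have h3 : s₀ * τ ≤ v - 1 := by
        rw [div_le_iff_of_neg hneg] at h2
        linarith
      linarith
    · exfalso
      have h1 := hfv _ (hDmem t le_rfl)
      rw [hfrep, hzero] at h1
      simp only [zero_mul, Finset.sum_const_zero, zero_add, mul_zero, add_zero] at h1
      -- use z₀
      have hz₀K : φm z₀ ∈ K := ⟨z₀, (hBoxmem z₀).2 hz₀.1, rfl⟩
      have h2 := hfu _ hz₀K
      simp only [hφm] at h2
      rw [hfrep, hzero, mul_zero, add_zero] at h2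
      have h3 := hfv (fun i => (1/(n:ℝ)) * (∑ j, F i j * z₀ j) - b i, t)
        ⟨fun i => hz₀.2 i, le_rfl⟩
      rw [hfrep, hzero, mul_zero, add_zero] at h3
      linarith
    · exact hpos
  -- box bound: v ≤ -ε * ∑|σ| + t * τ
  have hbox : v < -(ε * ∑ i, |σ i|) + t * τ := by
    set w' : Fin p → ℝ := fun i => if 0 ≤ σ i then -ε else ε with hw'
    have hmem : (w', t) ∈ D := by
      refine ⟨fun i => ?_, le_rfl⟩
      simp only [hw']
      split_ifs <;> simp [abs_of_nonneg hε, abs_of_nonpos (neg_nonpos.2 hε), hε]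
    have h1 := hfv _ hmem
    rw [hfrep] at h1
    have h2 : ∑ i, w' i * σ i = -(ε * ∑ i, |σ i|) := by
      rw [Finset.mul_sum, ← Finset.sum_neg_distrib]
      refine Finset.sum_congr rfl fun i _ => ?_
      simp only [hw']
      split_ifs with h
      · rw [abs_of_nonneg h]; ring
      · rw [abs_of_neg (not_le.mp h)]; ring
    rw [h2] at h1
    exact h1
  -- for all z in Box
  have hzbound : ∀ z ∈ Box,
      (∑ i, ((1/(n:ℝ)) * (∑ j, F i j * z j) - b i) * σ i) + (∑ j, c j * z j) * τ < u := by
    intro z hz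
    have := hfu _ ⟨z, hz, rfl⟩
    rw [hfrep] at this
    exact this
  -- define σ'
  refine ⟨fun i => -(σ i) / τ, ?_⟩
  have hτne : τ ≠ 0 := ne_of_gt hτpos
  -- choose the maximizing z*
  set A : Fin n → ℝ := fun j => c j - (1/(n:ℝ)) * ∑ i, (-(σ i)/τ) * F i j with hA
  set zs : Fin n → ℝ := fun j => if 0 ≤ A j then 1 else -1 with hzs
  have hzsBox : zs ∈ Box := by
    rw [hBoxmem]
    intro j
    simp only [hzs]
    split_ifs <;> constructor <;> norm_num
  have hmain := hzbound zs hzsBox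
  -- relate the sums
  have habs : ∑ j, A j * zs j = ∑ j, |A j| := by
    refine Finset.sum_congr rfl fun j _ => ?_
    simp only [hzs]
    split_ifs with h
    · rw [abs_of_nonneg h, mul_one]
    · rw [abs_of_neg (not_le.mp h), mul_neg_one]
  have hAeq : ∀ j, A j = c j + (1/(n:ℝ)) * ∑ i, (σ i / τ) * F i j := by
    intro j
    simp only [hA]
    have : (∑ i, (-σ i / τ) * F i j) = -∑ i, (σ i / τ) * F i j := by
      rw [← Finset.sum_neg_distrib]
      exact Finset.sum_congr rfl fun i _ => by ring
    rw [this]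
    ring
  set S1 := ∑ j, c j * zs j with hS1
  set S2 := ∑ i, ((1/(n:ℝ)) * (∑ j, F i j * zs j) - b i) * σ i with hS2
  set S3 := ∑ i, |σ i| with hS3
  set S4 := ∑ i, b i * σ i with hS4
  have hswap := swap_sum F (fun i => σ i / τ) zs (1/(n:ℝ))
  have hkey : ∑ j, |A j| = S1 + S2/τ + S4/τ := by
    rw [← habs]
    calc ∑ j, A j * zs j
        = ∑ j, (c j * zs j + ((1/(n:ℝ)) * ∑ i, (σ i / τ) * F i j) * zs j) := by
          refine Finset.sum_congr rfl fun j _ => ?_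
          rw [hAeq j]; ring
      _ = S1 + ∑ j, ((1/(n:ℝ)) * ∑ i, (σ i / τ) * F i j) * zs j := by
          rw [Finset.sum_add_distrib]
      _ = S1 + ∑ i, ((1/(n:ℝ)) * ∑ j, F i j * zs j) * (σ i / τ) := by rw [hswap]
      _ = S1 + ∑ i, ((((1/(n:ℝ)) * (∑ j, F i j * zs j) - b i) * σ i)/τ + (b i * σ i)/τ) := by
          congr 1
          exact Finset.sum_congr rfl fun i _ => by
            rw [← add_div, ← mul_div_assoc]
            congr 1
            ring
      _ = S1 + S2/τ + S4/τ := by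
          rw [Finset.sum_add_distrib, ← Finset.sum_div, ← Finset.sum_div]
          ring
  -- target sums
  have hbsum : ∑ i, b i * (-σ i / τ) = -(S4/τ) := by
    rw [hS4, Finset.sum_div, ← Finset.sum_neg_distrib]
    exact Finset.sum_congr rfl fun i _ => by field_simp
  have habsum : ∑ i, |-σ i / τ| = S3/τ := by
    rw [hS3, Finset.sum_div]
    refine Finset.sum_congr rfl fun i _ => ?_
    rw [abs_div, abs_neg, abs_of_pos hτpos]
  have h5 : S1 * τ + S2 + ε * S3 ≤ t * τ := by
    linarith [hmain, huv, hbox]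
  have h6 : S1 + S2/τ + ε * S3/τ ≤ t := by
    rw [← mul_le_mul_iff_of_pos_right hτpos]
    have e : (S1 + S2/τ + ε * S3/τ) * τ = S1 * τ + S2 + ε * S3 := by
      rw [add_mul, add_mul, div_mul_cancel₀ _ hτne, div_mul_cancel₀ _ hτne]
    rw [e]
    exact h5
  have hfin : ∑ j, |A j| + ∑ i, b i * (-σ i / τ) + ε * ∑ i, |-σ i / τ| ≤ V + δ := by
    rw [hkey, hbsum, habsum]
    calc S1 + S2/τ + S4/τ + -(S4/τ) + ε * (S3/τ) = S1 + S2/τ + ε * S3/τ := by ring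
      _ ≤ t := h6
      _ = V + δ := ht
  exact hfin

theorem stmt_12 (p n : ℕ) (hp : 0 < p) (hn : 0 < n)
    (F : Fin p → Fin n → ℝ) (hF : ∀ i j, F i j ∈ Set.Icc (-1:ℝ) 1) (b : Fin p → ℝ)
    (lp lm lp' lm' lp'' lm'' Γinv : ℝ → ℝ)
    (hlpc : ContinuousOn lp (Set.Icc (-1) 1))
    (hlmc : ContinuousOn lm (Set.Icc (-1) 1))
    (hlpd : ∀ x ∈ Set.Ioo (-1:ℝ) 1, HasDerivAt lp (lp' x) x)
    (hlmd : ∀ x ∈ Set.Ioo (-1:ℝ) 1, HasDerivAt lm (lm' x) x)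
    (hlpd2 : ∀ x ∈ Set.Ioo (-1:ℝ) 1, HasDerivAt lp' (lp'' x) x)
    (hlmd2 : ∀ x ∈ Set.Ioo (-1:ℝ) 1, HasDerivAt lm' (lm'' x) x)
    (hlpm : AntitoneOn lp (Set.Icc (-1) 1))
    (hlmm : MonotoneOn lm (Set.Icc (-1) 1))
    (hslope : ∀ x ∈ Set.Ioo (-1:ℝ) 1, 0 < lm' x - lp' x)
    (hGinvMem : ∀ m ∈ Set.Icc (lm (-1) - lp (-1)) (lm 1 - lp 1), Γinv m ∈ Set.Icc (-1:ℝ) 1)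
    (hGinvRight : ∀ m ∈ Set.Icc (lm (-1) - lp (-1)) (lm 1 - lp 1), lm (Γinv m) - lp (Γinv m) = m)
    (hGinvLeft : ∀ g ∈ Set.Icc (-1:ℝ) 1, Γinv (lm g - lp g) = g)
    (ε : ℝ) (hε : 0 ≤ ε) (hZ : (ZeSet p n F b ε).Nonempty) :
    sInf {v : ℝ | ∃ g : Fin n → ℝ, (∀ j, g j ∈ Set.Icc (-1:ℝ) 1) ∧
        v = sSup {w : ℝ | ∃ z ∈ ZeSet p n F b ε, w = lossV lp lm n z g}} =
      (1 / 2) * sInf {v : ℝ | ∃ σ : Fin p → ℝ,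
        v = -(∑ i, b i * σ i) + (1 / (n : ℝ)) * (∑ j, Psi lp lm Γinv (∑ i, σ i * F i j)) +
          ε * ∑ i, |σ i|} := by
  classical
  have hn' : (n:ℝ) ≠ 0 := Nat.cast_ne_zero.2 hn.ne'
  have hnpos : (0:ℝ) < n := Nat.cast_pos.2 hn
  obtain ⟨z₀, hz₀⟩ := hZ
  have hZ' : (ZeSet p n F b ε).Nonempty := ⟨z₀, hz₀⟩
  have hmono : StrictMonoOn (fun x => lm x - lp x) (Set.Icc (-1:ℝ) 1) := by
    apply strictMonoOn_of_deriv_pos (convex_Icc _ _) (hlmc.sub hlpc)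
    intro x hx
    rw [interior_Icc] at hx
    rw [((hlmd x hx).sub (hlpd x hx)).deriv]
    exact hslope x hx
  -- bounds on lp, lm
  obtain ⟨Cp, hCp⟩ := (isCompact_Icc (a := (-1:ℝ)) (b := 1)).exists_bound_of_continuousOn hlpc
  obtain ⟨Cm, hCm⟩ := (isCompact_Icc (a := (-1:ℝ)) (b := 1)).exists_bound_of_continuousOn hlmc
  set B := max Cp Cm with hB
  have hB1 : ∀ x ∈ Set.Icc (-1:ℝ) 1, |lp x| ≤ B := fun x hx => by
    have := hCp x hx; rw [Real.norm_eq_abs] at this; exact this.trans (le_max_left _ _)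
  have hB2 : ∀ x ∈ Set.Icc (-1:ℝ) 1, |lm x| ≤ B := fun x hx => by
    have := hCm x hx; rw [Real.norm_eq_abs] at this; exact this.trans (le_max_right _ _)
  -- loss bound
  have hlossabs : ∀ z g : Fin n → ℝ, (∀ j, g j ∈ Set.Icc (-1:ℝ) 1) →
      (∀ j, z j ∈ Set.Icc (-1:ℝ) 1) → |lossV lp lm n z g| ≤ 2*B := by
    intro z g hg hz
    rw [lossV, abs_mul, abs_of_nonneg (by positivity : (0:ℝ) ≤ 1/(n:ℝ))]
    calc (1/(n:ℝ)) * |∑ j, ((1 + z j) / 2 * lp (g j) + (1 - z j) / 2 * lm (g j))|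
        ≤ (1/(n:ℝ)) * ∑ j, |(1 + z j) / 2 * lp (g j) + (1 - z j) / 2 * lm (g j)| :=
          mul_le_mul_of_nonneg_left (Finset.abs_sum_le_sum_abs _ _) (by positivity)
      _ ≤ (1/(n:ℝ)) * ∑ _j : Fin n, 2*B := by
          refine mul_le_mul_of_nonneg_left (Finset.sum_le_sum fun j _ => ?_) (by positivity)
          have hzj := hz j
          have hp := hB1 (g j) (hg j)
          have hm := hB2 (g j) (hg j)
          have ha1 : |(1 + z j)/2| ≤ 1 := abs_le.2 ⟨by linarith [hzj.1], by linarith [hzj.2]⟩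
          have ha2 : |(1 - z j)/2| ≤ 1 := abs_le.2 ⟨by linarith [hzj.2], by linarith [hzj.1]⟩
          calc |(1 + z j) / 2 * lp (g j) + (1 - z j) / 2 * lm (g j)|
              ≤ |(1 + z j) / 2 * lp (g j)| + |(1 - z j) / 2 * lm (g j)| := abs_add_le _ _
            _ = |(1 + z j)/2| * |lp (g j)| + |(1 - z j)/2| * |lm (g j)| := by
                rw [abs_mul, abs_mul]
            _ ≤ 1 * B + 1 * B := add_le_add
                (mul_le_mul ha1 hp (abs_nonneg _) zero_le_one)
                (mul_le_mul ha2 hm (abs_nonneg _) zero_le_one)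
            _ = 2*B := by ring
      _ = (1/(n:ℝ)) * ((n:ℝ) * (2*B)) := by
          rw [Finset.sum_const, Finset.card_univ, Fintype.card_fin, nsmul_eq_mul]
      _ = 2*B := by field_simp
  -- loss sets
  have hLbddA : ∀ g : Fin n → ℝ, (∀ j, g j ∈ Set.Icc (-1:ℝ) 1) →
      BddAbove {w | ∃ z ∈ ZeSet p n F b ε, w = lossV lp lm n z g} := by
    intro g hg
    refine ⟨2*B, ?_⟩
    rintro w ⟨z, hz, rfl⟩
    exact (abs_le.1 (hlossabs z g hg hz.1)).2
  have hLne : ∀ g : Fin n → ℝ, {w | ∃ z ∈ ZeSet p n F b ε, w = lossV lp lm n z g}.Nonempty :=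
    fun g => ⟨_, z₀, hz₀, rfl⟩
  -- M sets
  have hMbddA : ∀ c : Fin n → ℝ, BddAbove {w | ∃ z ∈ ZeSet p n F b ε, w = ∑ j, c j * z j} := by
    intro c
    refine ⟨∑ j, |c j|, ?_⟩
    rintro w ⟨z, hz, rfl⟩
    refine Finset.sum_le_sum fun j _ => ?_
    calc c j * z j ≤ |c j * z j| := le_abs_self _
      _ = |c j| * |z j| := abs_mul _ _
      _ ≤ |c j| * 1 := mul_le_mul_of_nonneg_left (abs_le.2 ⟨(hz.1 j).1, (hz.1 j).2⟩) (abs_nonneg _)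
      _ = |c j| := mul_one _
  have hMneA : ∀ c : Fin n → ℝ, {w | ∃ z ∈ ZeSet p n F b ε, w = ∑ j, c j * z j}.Nonempty :=
    fun c => ⟨_, z₀, hz₀, rfl⟩
  -- decomposition of the sup of losses
  have hdecomp : ∀ g : Fin n → ℝ, (∀ j, g j ∈ Set.Icc (-1:ℝ) 1) →
      sSup {w | ∃ z ∈ ZeSet p n F b ε, w = lossV lp lm n z g}
        = (1/(2*(n:ℝ))) * (∑ j, (lp (g j) + lm (g j)))
          + (1/(2*(n:ℝ))) * sSup {w | ∃ z ∈ ZeSet p n F b ε,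
              w = ∑ j, (-(lm (g j) - lp (g j))) * z j} := by
    intro g hg
    have hlosseq : ∀ z : Fin n → ℝ, lossV lp lm n z g
        = (1/(2*(n:ℝ))) * (∑ j, (lp (g j) + lm (g j)))
          + (1/(2*(n:ℝ))) * ∑ j, (-(lm (g j) - lp (g j))) * z j := by
      intro z
      rw [lossV, Finset.mul_sum, Finset.mul_sum, Finset.mul_sum, ← Finset.sum_add_distrib]
      refine Finset.sum_congr rfl fun j _ => ?_
      field_simp
      ring
    have himg : {w | ∃ z ∈ ZeSet p n F b ε, w = lossV lp lm n z g}
        = (fun x => (1/(2*(n:ℝ))) * (∑ j, (lp (g j) + lm (g j))) + (1/(2*(n:ℝ))) * x)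
          '' {w | ∃ z ∈ ZeSet p n F b ε, w = ∑ j, (-(lm (g j) - lp (g j))) * z j} := by
      ext w
      simp only [Set.mem_setOf_eq, Set.mem_image]
      constructor
      · rintro ⟨z, hz, rfl⟩
        exact ⟨∑ j, (-(lm (g j) - lp (g j))) * z j, ⟨z, hz, rfl⟩, (hlosseq z).symm⟩
      · rintro ⟨x, ⟨z, hz, rfl⟩, rfl⟩
        exact ⟨z, hz, (hlosseq z).symm⟩
    have hmap := Monotone.map_csSup_of_continuousAt
      (f := fun x : ℝ => (1/(2*(n:ℝ))) * (∑ j, (lp (g j) + lm (g j))) + (1/(2*(n:ℝ))) * x)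
      (by fun_prop)
      (fun x y hxy => by
        dsimp only
        exact add_le_add le_rfl (mul_le_mul_of_nonneg_left hxy (by positivity)))
      (hMneA (fun j => -(lm (g j) - lp (g j)))) (hMbddA (fun j => -(lm (g j) - lp (g j))))
    rw [himg, ← hmap]
  -- the two sets
  set S := {v : ℝ | ∃ g : Fin n → ℝ, (∀ j, g j ∈ Set.Icc (-1:ℝ) 1) ∧
      v = sSup {w : ℝ | ∃ z ∈ ZeSet p n F b ε, w = lossV lp lm n z g}} with hSdef
  set T := {v : ℝ | ∃ σ : Fin p → ℝ,
      v = -(∑ i, b i * σ i) + (1 / (n : ℝ)) * (∑ j, Psi lp lm Γinv (∑ i, σ i * F i j)) +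
        ε * ∑ i, |σ i|} with hTdef
  have hSne : S.Nonempty := by
    refine ⟨_, (fun _ => 0), fun j => by norm_num, rfl⟩
  have hSlow : ∀ s ∈ S, -(2*B) ≤ s := by
    rintro _ ⟨g, hg, rfl⟩
    refine le_trans (abs_le.1 (hlossabs z₀ g hg hz₀.1)).1 ?_
    exact le_csSup (hLbddA g hg) ⟨z₀, hz₀, rfl⟩
  have hSbdd : BddBelow S := ⟨-(2*B), hSlow⟩
  -- Inequality 1 : ∀ t ∈ T, 2 * sInf S ≤ t
  have hT1 : ∀ t ∈ T, 2 * sInf S ≤ t := by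
    rintro _ ⟨σ, rfl⟩
    choose g hgmem hgeq using fun j : Fin n =>
      Psi_attained_aux (lp := lp) (lm := lm) hmono hGinvMem hGinvRight (∑ i, σ i * F i j)
    have hsS : sSup {w | ∃ z ∈ ZeSet p n F b ε, w = lossV lp lm n z g} ∈ S := ⟨g, hgmem, rfl⟩
    have h1 : sInf S ≤ sSup {w | ∃ z ∈ ZeSet p n F b ε, w = lossV lp lm n z g} :=
      csInf_le hSbdd hsS
    -- weak duality with σ' = -n σ
    have he : ∀ j : Fin n, (1/(n:ℝ)) * ∑ i, (-(n:ℝ) * σ i) * F i j = -(∑ i, σ i * F i j) := by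
      intro j
      have : ∑ i, (-(n:ℝ) * σ i) * F i j = (-(n:ℝ)) * ∑ i, σ i * F i j := by
        rw [Finset.mul_sum]
        exact Finset.sum_congr rfl fun i _ => by ring
      rw [this]
      field_simp
    have hMle : sSup {w | ∃ z ∈ ZeSet p n F b ε, w = ∑ j, (-(lm (g j) - lp (g j))) * z j}
        ≤ (∑ j, |lm (g j) - lp (g j) - ∑ i, σ i * F i j|)
          - (n:ℝ) * ∑ i, b i * σ i + ε * ((n:ℝ) * ∑ i, |σ i|) := by
      refine csSup_le (hMneA _) ?_
      rintro w ⟨z, hz, rfl⟩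
      have hwd := weak_dual F b (fun j => -(lm (g j) - lp (g j))) (fun i => -(n:ℝ) * σ i) hz
      have e1 : ∑ j, |(fun j => -(lm (g j) - lp (g j))) j
          - (1/(n:ℝ)) * ∑ i, (fun i => -(n:ℝ) * σ i) i * F i j|
          = ∑ j, |lm (g j) - lp (g j) - ∑ i, σ i * F i j| := by
        refine Finset.sum_congr rfl fun j _ => ?_
        simp only
        rw [he j]
        rw [show -(lm (g j) - lp (g j)) - -(∑ i, σ i * F i j)
          = -(lm (g j) - lp (g j) - ∑ i, σ i * F i j) by ring, abs_neg]
      have e2 : ∑ i, b i * ((fun i => -(n:ℝ) * σ i) i) = -((n:ℝ) * ∑ i, b i * σ i) := by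
        simp only
        rw [Finset.mul_sum, ← Finset.sum_neg_distrib]
        exact Finset.sum_congr rfl fun i _ => by ring
      have e3 : ∑ i, |(fun i => -(n:ℝ) * σ i) i| = (n:ℝ) * ∑ i, |σ i| := by
        simp only
        rw [Finset.mul_sum]
        exact Finset.sum_congr rfl fun i _ => by
          rw [abs_mul, abs_neg, Nat.abs_cast]
      rw [e1, e2, e3] at hwd
      linarith
    have hPQ : (∑ j, (lp (g j) + lm (g j)))
        + (∑ j, |lm (g j) - lp (g j) - ∑ i, σ i * F i j|)
        = ∑ j, Psi lp lm Γinv (∑ i, σ i * F i j) := by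
      rw [← Finset.sum_add_distrib]
      exact Finset.sum_congr rfl fun j _ => hgeq j
    rw [hdecomp g hgmem] at h1
    set P := ∑ j, (lp (g j) + lm (g j)) with hP
    set Q := ∑ j, |lm (g j) - lp (g j) - ∑ i, σ i * F i j| with hQ
    set Mg := sSup {w | ∃ z ∈ ZeSet p n F b ε, w = ∑ j, (-(lm (g j) - lp (g j))) * z j} with hMg
    have key : 2 * ((1/(2*(n:ℝ))) * P + (1/(2*(n:ℝ))) * Mg)
        ≤ -(∑ i, b i * σ i) + (1/(n:ℝ)) * (P + Q) + ε * ∑ i, |σ i| := by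
      have h2 : Mg ≤ Q - (n:ℝ) * ∑ i, b i * σ i + ε * ((n:ℝ) * ∑ i, |σ i|) := hMle
      have e4 : 2 * ((1/(2*(n:ℝ))) * P + (1/(2*(n:ℝ))) * Mg) = (1/(n:ℝ)) * P + (1/(n:ℝ)) * Mg := by
        field_simp
      have e5 : (1/(n:ℝ)) * (Q - (n:ℝ) * ∑ i, b i * σ i + ε * ((n:ℝ) * ∑ i, |σ i|))
          = (1/(n:ℝ)) * Q - ∑ i, b i * σ i + ε * ∑ i, |σ i| := by
        field_simp
      have h3 : (1/(n:ℝ)) * Mg ≤ (1/(n:ℝ)) * (Q - (n:ℝ) * ∑ i, b i * σ i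
          + ε * ((n:ℝ) * ∑ i, |σ i|)) := mul_le_mul_of_nonneg_left h2 (by positivity)
      rw [e5] at h3
      rw [e4, mul_add (1/(n:ℝ)) P Q]
      linarith
    rw [← hPQ]
    linarith
  have hTne : T.Nonempty := ⟨_, 0, rfl⟩
  have ineq1 : 2 * sInf S ≤ sInf T := le_csInf hTne hT1
  have hTbdd : BddBelow T := ⟨2 * sInf S, hT1⟩
  -- Inequality 2
  have hT2 : ∀ s ∈ S, sInf T ≤ 2 * s := by
    rintro _ ⟨g, hg, rfl⟩
    refine le_of_forall_pos_le_add fun δ hδ => ?_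
    obtain ⟨σ', hσ'⟩ := sep_lemma F b hε hZ' (fun j => -(lm (g j) - lp (g j)))
      (mul_pos hδ hnpos)
    set σ : Fin p → ℝ := fun i => -σ' i / (n:ℝ) with hσdef
    have htT : -(∑ i, b i * σ i)
        + (1/(n:ℝ)) * (∑ j, Psi lp lm Γinv (∑ i, σ i * F i j)) + ε * ∑ i, |σ i| ∈ T :=
      ⟨σ, rfl⟩
    have hstep : sInf T ≤ -(∑ i, b i * σ i)
        + (1/(n:ℝ)) * (∑ j, Psi lp lm Γinv (∑ i, σ i * F i j)) + ε * ∑ i, |σ i| :=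
      csInf_le hTbdd htT
    -- bound the element
    have hmj : ∀ j, ∑ i, σ i * F i j = -((1/(n:ℝ)) * ∑ i, σ' i * F i j) := by
      intro j
      rw [Finset.mul_sum, ← Finset.sum_neg_distrib]
      refine Finset.sum_congr rfl fun i _ => ?_
      simp only [hσdef]
      ring
    have hPsile : ∀ j, Psi lp lm Γinv (∑ i, σ i * F i j)
        ≤ lp (g j) + lm (g j)
          + |(-(lm (g j) - lp (g j))) - (1/(n:ℝ)) * ∑ i, σ' i * F i j| := by
      intro j
      have h := Psi_le_aux (Γinv := Γinv) hlpm hlmm hmono hGinvMem hGinvRight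
        (∑ i, σ i * F i j) (hg j)
      have : |lm (g j) - lp (g j) - ∑ i, σ i * F i j|
          = |(-(lm (g j) - lp (g j))) - (1/(n:ℝ)) * ∑ i, σ' i * F i j| := by
        rw [hmj j]
        rw [show lm (g j) - lp (g j) - -((1/(n:ℝ)) * ∑ i, σ' i * F i j)
          = -((-(lm (g j) - lp (g j))) - (1/(n:ℝ)) * ∑ i, σ' i * F i j) by ring, abs_neg]
      rw [this] at h
      exact h
    have hbs : ∑ i, b i * σ i = -((1/(n:ℝ)) * ∑ i, b i * σ' i) := by
      rw [Finset.mul_sum, ← Finset.sum_neg_distrib]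
      refine Finset.sum_congr rfl fun i _ => ?_
      simp only [hσdef]
      ring
    have habs2 : ∑ i, |σ i| = (1/(n:ℝ)) * ∑ i, |σ' i| := by
      rw [Finset.mul_sum]
      refine Finset.sum_congr rfl fun i _ => ?_
      simp only [hσdef]
      rw [abs_div, abs_neg, Nat.abs_cast]
      ring
    set P := ∑ j, (lp (g j) + lm (g j)) with hP
    set Q := ∑ j, |(-(lm (g j) - lp (g j))) - (1/(n:ℝ)) * ∑ i, σ' i * F i j| with hQ
    set Mg := sSup {w | ∃ z ∈ ZeSet p n F b ε, w = ∑ j, (-(lm (g j) - lp (g j))) * z j} with hMg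
    have hPsum : ∑ j, Psi lp lm Γinv (∑ i, σ i * F i j) ≤ P + Q := by
      rw [hP, hQ, ← Finset.sum_add_distrib]
      exact Finset.sum_le_sum fun j _ => hPsile j
    -- hσ' : Q + ∑ b σ' + ε ∑ |σ'| ≤ Mg + δ * n
    have hfin : -(∑ i, b i * σ i)
        + (1/(n:ℝ)) * (∑ j, Psi lp lm Γinv (∑ i, σ i * F i j)) + ε * ∑ i, |σ i|
        ≤ 2 * ((1/(2*(n:ℝ))) * P + (1/(2*(n:ℝ))) * Mg) + δ := by
      rw [hbs, habs2]
      have h4 : (1/(n:ℝ)) * (∑ j, Psi lp lm Γinv (∑ i, σ i * F i j)) ≤ (1/(n:ℝ)) * (P + Q) :=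
        mul_le_mul_of_nonneg_left hPsum (by positivity)
      have h5 : Q + ∑ i, b i * σ' i + ε * ∑ i, |σ' i| ≤ Mg + δ * (n:ℝ) := hσ'
      have e6 : 2 * ((1/(2*(n:ℝ))) * P + (1/(2*(n:ℝ))) * Mg) + δ
          = (1/(n:ℝ)) * P + (1/(n:ℝ)) * (Mg + δ * (n:ℝ)) := by
        field_simp
        ring
      rw [e6]
      have h6 : (1/(n:ℝ)) * (Q + ∑ i, b i * σ' i + ε * ∑ i, |σ' i|)
          ≤ (1/(n:ℝ)) * (Mg + δ * (n:ℝ)) := mul_le_mul_of_nonneg_left h5 (by positivity)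
      have e7 : (1/(n:ℝ)) * (Q + ∑ i, b i * σ' i + ε * ∑ i, |σ' i|)
          = (1/(n:ℝ)) * Q + (1/(n:ℝ)) * ∑ i, b i * σ' i + ε * ((1/(n:ℝ)) * ∑ i, |σ' i|) := by
        ring
      rw [e7] at h6
      have e8 : (1/(n:ℝ)) * (P + Q) = (1/(n:ℝ)) * P + (1/(n:ℝ)) * Q := by ring
      rw [e8] at h4
      linarith
    rw [hdecomp g hg]
    linarith
  have ineq2 : sInf T ≤ 2 * sInf S := by
    have hlb : ∀ s ∈ S, sInf T / 2 ≤ s := fun s hs => by linarith [hT2 s hs]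
    have h := le_csInf hSne hlb
    linarith
  linarith
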